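/- Every endo-rigid Boolean algebra B is dual Hopfian, i.e. every injective endomorphism of B is an automorphism. -/
import Mathlib


variable {B : Type*} [BooleanAlgebra B]

def exKer (h : B → B) : Set B :=
  {z | ∃ x₁ x₂ : B, z = x₁ ⊔ x₂ ∧ h x₁ = ⊥ ∧ ∀ y ≤ x₂, h y = y}

def IsEndo {C : Type*} [BooleanAlgebra C] (h : C → C) : Prop :=
  (∀ x y, h (x ⊔ y) = h x ⊔ h y) ∧ (∀ x y, h (x ⊓ y) = h x ⊓ h y) ∧ h ⊥ = ⊥ ∧ h ⊤ = ⊤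

def EndoRigid (B : Type*) [BooleanAlgebra B] : Prop :=
  ∀ h : B → B, IsEndo h → Finite (Quot (fun x y : B => symmDiff x y ∈ exKer h))

/-- Every endo-rigid Boolean algebra is dual Hopfian: every injective endomorphism is an
automorphism. -/
theorem endoRigid_dual_hopfian (hB : EndoRigid B) (h : B → B) (he : IsEndo h)
    (hinj : Function.Injective h) : Function.Bijective h := by
  obtain ⟨hsup, hinf, hbot, htop⟩ := he
  -- h preserves complements
  have hcompl : ∀ x, h xᶜ = (h x)ᶜ := by
    intro x
    have : IsCompl (h x) (h xᶜ) := by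
      apply IsCompl.of_eq
      · rw [← hinf, inf_compl_eq_bot, hbot]
      · rw [← hsup, sup_compl_eq_top, htop]
    exact (this.compl_eq).symm
  have hsdiff : ∀ x y, h (x \ y) = h x \ h y := by
    intro x y
    rw [sdiff_eq, hinf, hcompl, sdiff_eq]
  have hsymm : ∀ x y, h (symmDiff x y) = symmDiff (h x) (h y) := by
    intro x y
    rw [symmDiff_def, hsup, hsdiff, hsdiff, symmDiff_def]
  have hmono : ∀ x y : B, x ≤ y → h x ≤ h y := by
    intro x y hxy
    have : h y = h x ⊔ h y := by rw [← hsup, sup_eq_right.2 hxy]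
    rw [this]; exact le_sup_left
  -- characterization of exKer for injective h
  have memI : ∀ z : B, z ∈ exKer h ↔ ∀ y ≤ z, h y = y := by
    intro z
    constructor
    · rintro ⟨x₁, x₂, rfl, h1, h2⟩
      have hx1 : x₁ = ⊥ := hinj (by rw [h1, hbot])
      intro y hy
      rw [hx1, bot_sup_eq] at hy
      exact h2 y hy
    · intro hz
      exact ⟨⊥, z, (bot_sup_eq z).symm, hbot, hz⟩
  set r : B → B → Prop := fun x y : B => symmDiff x y ∈ exKer h with hr
  -- the set is sup-closed in a suitable sense, giving transitivity
  have requiv : Equivalence r := by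
    constructor
    · intro x
      rw [hr]
      simp only [symmDiff_self, memI]
      intro y hy
      rw [le_bot_iff.1 hy, hbot]
    · intro x y hxy
      show symmDiff y x ∈ exKer h
      rw [symmDiff_comm]; exact hxy
    · intro x y z hxy hyz
      rw [hr, memI] at *
      intro w hw
      have hw' : w ≤ symmDiff x y ⊔ symmDiff y z := hw.trans (symmDiff_triangle x y z)
      have hdecomp : w = w ⊓ symmDiff x y ⊔ w \ symmDiff x y := (sup_inf_sdiff w _).symm
      have h1 : h (w ⊓ symmDiff x y) = w ⊓ symmDiff x y := hxy _ inf_le_right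
      have h2 : h (w \ symmDiff x y) = w \ symmDiff x y := by
        apply hyz
        calc w \ symmDiff x y ≤ (symmDiff x y ⊔ symmDiff y z) \ symmDiff x y :=
              sdiff_le_sdiff_right hw'
          _ ≤ symmDiff y z := by rw [sup_sdiff_left_self]; exact sdiff_le
      rw [hdecomp, hsup, h1, h2]
  -- cancellation: r (h x) (h y) → r x y
  have cancel : ∀ x y : B, r (h x) (h y) → r x y := by
    intro x y hxy
    rw [hr, memI] at *
    intro w hw
    have : h w ≤ symmDiff (h x) (h y) := by
      rw [← hsymm]; exact hmono _ _ hw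
    exact hinj (hxy _ this)
  have canceln : ∀ n : ℕ, ∀ x y : B, r (h^[n] x) (h^[n] y) → r x y := by
    intro n
    induction n with
    | zero => intro x y hxy; exact hxy
    | succ n ih =>
      intro x y hxy
      rw [Function.iterate_succ_apply, Function.iterate_succ_apply] at hxy
      exact cancel x y (ih _ _ hxy)
  constructor
  · exact hinj
  · -- surjectivity via pigeonhole on the finite quotient
    intro b
    haveI := hB h ⟨hsup, hinf, hbot, htop⟩
    obtain ⟨m, n, hmn, heq⟩ := Finite.exists_ne_map_eq_of_infinite
      (fun n : ℕ => Quot.mk r (h^[n] b))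
    -- wlog m < n
    wlog hlt : m < n generalizing m n
    · exact this n m hmn.symm heq.symm (by omega)
    have hrel : r (h^[m] b) (h^[n] b) := by
      have := Quot.eq.1 heq
      exact (requiv.eqvGen_iff).1 this
    set k := n - m with hk
    have hkpos : 1 ≤ k := by omega
    have hiter : h^[n] b = h^[m] (h^[k] b) := by
      rw [← Function.iterate_add_apply]
      congr 1; omega
    have hrb : r b (h^[k] b) := by
      apply canceln m
      rw [← hiter]; exact hrel
    rw [hr, memI] at hrb
    have hd : h (symmDiff b (h^[k] b)) = symmDiff b (h^[k] b) := hrb _ le_rfl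
    refine ⟨symmDiff (h^[k-1] b) (symmDiff b (h^[k] b)), ?_⟩
    have hk1 : h (h^[k-1] b) = h^[k] b := by
      conv_rhs => rw [show k = (k-1)+1 from by omega, Function.iterate_succ_apply']
    rw [hsymm, hd, hk1, symmDiff_comm b, symmDiff_symmDiff_cancel_left]
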